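/- Let H be a subgroup of a countable discrete group G. The group von Neumann algebra L(H) has trivial relative commutant in L(G) (i.e., L(H)' ∩ L(G) = ℂ1) if and only if every element g ∈ G with g ≠ e has infinitely many H-conjugates {hgh⁻¹ : h ∈ H}. -/

import Mathlib

open scoped ENNReal
set_option maxHeartbeats 1000000

section Aux

variable {G : Type*} [Group G]

private lemma two_toReal_pos : (0:ℝ) < (2:ℝ≥0∞).toReal := by norm_num

/-- value of an `lp.single` for constant family ℂ. -/
private lemma single_apply'' [DecidableEq G] (y x : G) (c : ℂ) :
    (lp.single 2 y c : ∀ _ : G, ℂ) x = if x = y then c else 0 := by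
  rw [lp.single_apply]
  by_cases h : x = y
  · subst h; simp
  · simp [h]

private lemma memℓp_comp_mulRight (f : lp (fun _ : G => ℂ) 2) (g : G) :
    Memℓp (fun x => f (x * g)) 2 := by
  apply memℓp_gen
  have hs := (lp.memℓp f).summable two_toReal_pos
  exact ((Equiv.mulRight g).summable_iff (f := fun x => ‖f x‖ ^ (2:ℝ≥0∞).toReal)).2 hs

/-- the right regular representation. -/
private noncomputable def rho (g : G) :
    lp (fun _ : G => ℂ) 2 →L[ℂ] lp (fun _ : G => ℂ) 2 :=
  LinearMap.mkContinuous
    { toFun := fun f => ⟨fun x => f (x * g), memℓp_comp_mulRight f g⟩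
      map_add' := fun f₁ f₂ => by
        apply lp.ext
        funext x
        simp [lp.coeFn_add, Pi.add_apply]
        rfl
      map_smul' := fun c f => by
        apply lp.ext
        funext x
        simp [lp.coeFn_smul, Pi.smul_apply] } 1
    (by
      intro f
      have h1 : HasSum (fun x => ‖f x‖ ^ (2:ℝ≥0∞).toReal) (‖f‖ ^ (2:ℝ≥0∞).toReal) :=
        lp.hasSum_norm two_toReal_pos f
      have h2 : HasSum (fun x : G => ‖f (x * g)‖ ^ (2:ℝ≥0∞).toReal)
          (‖f‖ ^ (2:ℝ≥0∞).toReal) :=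
        ((Equiv.mulRight g).hasSum_iff (f := fun x => ‖f x‖ ^ (2:ℝ≥0∞).toReal)).2 h1
      have h3 := lp.hasSum_norm two_toReal_pos
        (⟨fun x => f (x * g), memℓp_comp_mulRight f g⟩ : lp (fun _ : G => ℂ) 2)
      have h4 : ‖(⟨fun x => f (x * g), memℓp_comp_mulRight f g⟩ :
          lp (fun _ : G => ℂ) 2)‖ ^ (2:ℝ≥0∞).toReal = ‖f‖ ^ (2:ℝ≥0∞).toReal :=
        h3.unique h2
      have h5 : ‖(⟨fun x => f (x * g), memℓp_comp_mulRight f g⟩ :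
          lp (fun _ : G => ℂ) 2)‖ = ‖f‖ :=
        (Real.rpow_left_inj (norm_nonneg _) (norm_nonneg _)
          (ne_of_gt two_toReal_pos)).1 h4
      simpa [h5] using le_of_eq h5)

private lemma rho_apply (g : G) (f : lp (fun _ : G => ℂ) 2) (x : G) :
    (rho g f : ∀ _ : G, ℂ) x = f (x * g) := rfl

end Aux

theorem groupVonNeumannAlgebra_irreducible_iff_infinite_conjugates
    {G : Type*} [Group G] [Countable G] (H : Subgroup G)
    (lam : G → (lp (fun _ : G => ℂ) 2 →L[ℂ] lp (fun _ : G => ℂ) 2))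
    (hlam : ∀ (g : G) (f : lp (fun _ : G => ℂ) 2) (x : G),
      (lam g f : ∀ _ : G, ℂ) x = f (g⁻¹ * x)) :
    ({x | x ∈ Set.centralizer (Set.centralizer {T | ∃ g : G, T = lam g}) ∧
        x ∈ Set.centralizer
          (Set.centralizer (Set.centralizer {T | ∃ h ∈ H, T = lam h}))} =
      Set.range fun c : ℂ =>
        c • (1 : lp (fun _ : G => ℂ) 2 →L[ℂ] lp (fun _ : G => ℂ) 2)) ↔
    ∀ g : G, g ≠ 1 → {x : G | ∃ h ∈ H, x = h * g * h⁻¹}.Infinite := by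
  classical
  set E := lp (fun _ : G => ℂ) 2 with hE
  set S₁ : Set (E →L[ℂ] E) := {T | ∃ g : G, T = lam g} with hS₁
  set S₂ : Set (E →L[ℂ] E) := {T | ∃ h ∈ H, T = lam h} with hS₂
  -- delta functions
  set d : G → E := fun y => lp.single 2 y (1:ℂ) with hd
  have hdval : ∀ y x : G, (d y : ∀ _ : G, ℂ) x = if x = y then 1 else 0 := by
    intro y x; simp [hd, single_apply'', Pi.single_apply]
  -- multiplicativity of lam
  have hmul : ∀ a b : G, lam a * lam b = lam (a * b) := by
    intro a b
    ext f x
    rw [show ((lam a * lam b) f : forall _ : G, ℂ) x = (lam a (lam b f) : forall _ : G, ℂ) x from rfl]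
    rw [hlam a (lam b f) x, hlam b f _, hlam (a*b) f x]
    congr 1
    group
  -- rho commutes with every lam g, hence rho g' ∈ centralizer S₁
  have hrho_mem : ∀ g' : G, rho g' ∈ Set.centralizer S₁ := by
    intro g'
    rw [Set.mem_centralizer_iff]
    rintro m ⟨g, rfl⟩
    ext f x
    rw [show ((lam g * rho g') f : forall _ : G, ℂ) x = (lam g (rho g' f) : forall _ : G, ℂ) x from rfl,
      show ((rho g' * lam g) f : forall _ : G, ℂ) x = (rho g' (lam g f) : forall _ : G, ℂ) x from rfl]
    rw [hlam g (rho g' f) x, rho_apply, rho_apply, hlam g f _]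
    congr 1
    group
  constructor
  · -- trivial relative commutant → infinite conjugacy classes
    intro hEq g₀ hg₀
    by_contra hfin
    rw [Set.not_infinite] at hfin
    set s : Finset G := hfin.toFinset with hs
    have hmem_s : ∀ x : G, x ∈ s ↔ ∃ h ∈ H, x = h * g₀ * h⁻¹ := by
      intro x; simp [hs, Set.Finite.mem_toFinset]
    have hclosed : ∀ h ∈ H, ∀ c ∈ s, h * c * h⁻¹ ∈ s := by
      intro h hh c hc
      rcases (hmem_s c).1 hc with ⟨h', hh', rfl⟩
      refine (hmem_s _).2 ⟨h * h', H.mul_mem hh hh', by group⟩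
    set T : E →L[ℂ] E := ∑ c ∈ s, lam c with hT
    have hT_mem : T ∈ {x | x ∈ Set.centralizer (Set.centralizer S₁) ∧
        x ∈ Set.centralizer (Set.centralizer (Set.centralizer S₂))} := by
      constructor
      · rw [Set.mem_centralizer_iff]
        intro m hm
        rw [hT, Finset.mul_sum, Finset.sum_mul]
        refine Finset.sum_congr rfl fun c _ => ?_
        exact (hm (lam c) ⟨c, rfl⟩).symm
      · apply Set.subset_centralizer_centralizer
        rw [Set.mem_centralizer_iff]
        rintro m ⟨h, hh, rfl⟩
        rw [hT, Finset.mul_sum, Finset.sum_mul]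
        have : ∀ c : G, lam h * lam c = lam (h * c) := fun c => hmul h c
        calc ∑ c ∈ s, lam h * lam c = ∑ c ∈ s, lam (h * c) := by
              exact Finset.sum_congr rfl fun c _ => hmul h c
          _ = ∑ c ∈ s, lam (c * h) := by
              refine Finset.sum_nbij' (fun c => h * c * h⁻¹) (fun c => h⁻¹ * c * h)
                (fun c hc => hclosed h hh c hc) ?_ ?_ ?_ ?_
              · intro c hc
                have := hclosed h⁻¹ (H.inv_mem hh) c hc
                simpa using this
              · intro c _; group
              · intro c _; group
              · intro c _; congr 1; group
          _ = ∑ c ∈ s, lam c * lam h := by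
              exact Finset.sum_congr rfl fun c _ => (hmul c h).symm
    rw [hEq] at hT_mem
    rcases hT_mem with ⟨c₀, hc₀⟩
    have hg₀s : g₀ ∈ s := (hmem_s g₀).2 ⟨1, H.one_mem, by group⟩
    have hval : (T (d 1) : ∀ _ : G, ℂ) g₀ = 1 := by
      rw [hT, ContinuousLinearMap.sum_apply, lp.coeFn_sum, Finset.sum_apply]
      have : ∀ c ∈ s, (lam c (d 1) : ∀ _ : G, ℂ) g₀ = if c = g₀ then 1 else 0 := by
        intro c _
        rw [hlam c (d 1) g₀, hdval 1 (c⁻¹ * g₀)]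
        by_cases hcg : c = g₀
        · simp [hcg]
        · have : c⁻¹ * g₀ ≠ 1 := fun hcon => hcg (inv_mul_eq_one.1 hcon)
          simp [hcg, this]
      rw [Finset.sum_congr rfl this]
      simp [Finset.sum_ite_eq' s g₀ (fun _ => (1:ℂ)), hg₀s]
    have hval2 : (T (d 1) : ∀ _ : G, ℂ) g₀ = 0 := by
      rw [← hc₀]
      rw [ContinuousLinearMap.smul_apply, ContinuousLinearMap.one_apply, lp.coeFn_smul,
        Pi.smul_apply, hdval 1 g₀]
      simp [hg₀]
    rw [hval] at hval2
    exact one_ne_zero hval2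
  · -- infinite conjugacy classes → trivial relative commutant
    intro hinf
    apply Set.eq_of_subset_of_subset
    · rintro T ⟨hT1, hT2⟩
      -- T commutes with rho g for all g
      have hTrho : ∀ g : G, rho g * T = T * rho g := fun g => hT1 (rho g) (hrho_mem g)
      -- T commutes with lam h for h ∈ H
      have hTlam : ∀ h ∈ H, lam h * T = T * lam h := by
        intro h hh
        have hsub : Set.centralizer (Set.centralizer (Set.centralizer S₂)) ⊆
            Set.centralizer S₂ :=
          Set.centralizer_subset Set.subset_centralizer_centralizer
        exact (hsub hT2) (lam h) ⟨h, hh, rfl⟩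
      set f : E := T (d 1) with hf
      -- matrix coefficient formula
      have hA : ∀ y x : G, (T (d y) : ∀ _ : G, ℂ) x = f (x * y⁻¹) := by
        intro y x
        have h1 : d y = rho y⁻¹ (d 1) := by
          apply lp.ext
          funext z
          rw [rho_apply, hdval y z, hdval 1 (z * y⁻¹)]
          by_cases hz : z = y
          · simp [hz]
          · have : z * y⁻¹ ≠ 1 := fun hcon => hz (mul_inv_eq_one.1 hcon)
            simp [hz, this]
        rw [h1, show T (rho y⁻¹ (d 1)) = (T * rho y⁻¹) (d 1) from rfl, ← hTrho y⁻¹,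
          ContinuousLinearMap.mul_apply, rho_apply]
      -- H-conjugation invariance
      have hB : ∀ h ∈ H, ∀ z : G, f (h * z * h⁻¹) = f z := by
        intro h hh z
        have h1 : lam h (d 1) = d h := by
          apply lp.ext
          funext x
          rw [hlam h (d 1) x, hdval 1 (h⁻¹ * x), hdval h x]
          by_cases hx : x = h
          · simp [hx]
          · have : h⁻¹ * x ≠ 1 := fun hcon => hx (inv_mul_eq_one.1 hcon).symm
            simp [hx, this]
        have h2 := hTlam h hh
        have h3 : (lam h (T (d 1)) : ∀ _ : G, ℂ) (h * z) =
            (T (lam h (d 1)) : ∀ _ : G, ℂ) (h * z) := by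
          rw [show lam h (T (d 1)) = (lam h * T) (d 1) from rfl, h2]; rfl
        rw [hlam h (T (d 1)) (h * z), h1, hA h (h * z)] at h3
        have hz1 : h⁻¹ * (h * z) = z := by group
        have hz2 : h * z * h⁻¹ = h * z * h⁻¹ := rfl
        rw [hz1] at h3
        rw [← h3]
      -- f vanishes off 1
      have hC : ∀ g : G, g ≠ 1 → f g = 0 := by
        intro g hg
        by_contra hfg
        have hS := hinf g hg
        have hsum := (lp.memℓp f).summable two_toReal_pos
        have htend := hsum.tendsto_cofinite_zero
        have hpos : (0:ℝ) < ‖f g‖ ^ (2:ℝ≥0∞).toReal :=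
          Real.rpow_pos_of_pos (norm_pos_iff.2 hfg) _
        have hev : ∀ᶠ x in Filter.cofinite,
            ‖f x‖ ^ (2:ℝ≥0∞).toReal < ‖f g‖ ^ (2:ℝ≥0∞).toReal :=
          htend.eventually (gt_mem_nhds hpos)
        have hfin' : {x : G | ¬ ‖f x‖ ^ (2:ℝ≥0∞).toReal < ‖f g‖ ^ (2:ℝ≥0∞).toReal}.Finite :=
          Filter.eventually_cofinite.1 hev
        apply hS
        apply hfin'.subset
        rintro x ⟨h, hh, rfl⟩
        have : f (h * g * h⁻¹) = f g := hB h hh g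
        simp [Set.mem_setOf_eq, this]
      -- T is scalar
      refine ⟨f 1, ?_⟩
      have hsingle : ∀ (y : G) (c : ℂ), T (lp.single 2 y c) = f 1 • lp.single 2 y c := by
        intro y c
        have h1 : (lp.single 2 y c : E) = c • d y := by
          apply lp.ext
          funext x
          rw [lp.coeFn_smul, Pi.smul_apply, single_apply'', hdval y x]
          by_cases hx : x = y <;> simp [hx]
        have h2 : T (d y) = f 1 • d y := by
          apply lp.ext
          funext x
          rw [hA y x, lp.coeFn_smul, Pi.smul_apply, hdval y x]
          by_cases hx : x = y
          · subst hx; simp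
          · have hne : x * y⁻¹ ≠ 1 := fun hcon => hx (mul_inv_eq_one.1 hcon)
            rw [hC _ hne]
            simp [hx]
        rw [h1, map_smul, h2, smul_comm]
      ext v
      have hv : HasSum (fun y : G => lp.single 2 y (v y)) v :=
        lp.hasSum_single (by norm_num) v
      have hTv : HasSum (fun y : G => T (lp.single 2 y (v y))) (T v) := hv.mapL T
      have hTv' : HasSum (fun y : G => f 1 • lp.single 2 y (v y)) (f 1 • v) :=
        hv.const_smul (f 1)
      have : T v = f 1 • v := by
        refine hTv.unique ?_
        have : (fun y : G => T (lp.single 2 y (v y))) =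
            fun y : G => f 1 • lp.single 2 y (v y) := by
          funext y; exact hsingle y (v y)
        rw [this]
        exact hTv'
      rw [this, lp.coeFn_smul, Pi.smul_apply, smul_eq_mul,
        ContinuousLinearMap.smul_apply, ContinuousLinearMap.one_apply,
        lp.coeFn_smul, Pi.smul_apply, smul_eq_mul]
    · rintro _ ⟨c, rfl⟩
      constructor
      · rw [Set.mem_centralizer_iff]
        intro m _
        rw [mul_smul_comm, smul_mul_assoc, mul_one, one_mul]
      · rw [Set.mem_centralizer_iff]
        intro m _
        rw [mul_smul_comm, smul_mul_assoc, mul_one, one_mul]
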